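/- Let P₀ > 0, E₀ ∈ (0,1), Y₀ ∈ ℝ, and let A(τ) be the 3×3 matrix whose only nonzero entry is A^Y_P = 6π/P₀³ (the Jacobian ∂f̄/∂I evaluated at 𝙹(τ) = (P₀, E₀, Y₀ − 3πτ/P₀²)). Then: (i) the matrix 𝚁(τ) with rows (1,0,0), (0,1,0), ((6π/P₀³)τ, 0, 1) satisfies d𝚁/dτ = A(τ)𝚁, 𝚁(0) = 1₃, is invertible for all τ ≥ 0, and 𝚁(τ)^{-1} is the matrix with rows (1,0,0), (0,1,0), (−(6π/P₀³)τ, 0, 1); (ii) the functions 𝙺^P(τ) = (E₀²/(4P₀)) [cos(2Y₀) − cos(2Y₀ − 6πτ/P₀²)], 𝙺^E(τ) = −((10E₀ − E₀³)/(8P₀²)) [cos(2Y₀) − cos(2Y₀ − 6πτ/P₀²)], 𝙺^Y(τ) = (3π/(16P₀⁴)) [34 + 25E₀² + 8E₀² cos(2Y₀)] τ + ((20 + E₀²)/(16P₀²)) [sin(2Y₀) − sin(2Y₀ − 6πτ/P₀²)] solve d𝙺/dτ = A(τ)𝙺 + p̄(𝙹(τ)), 𝙺(0) = 0. -/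

import Mathlib

open Real Matrix

/-- The Jacobian `∂f̄/∂I` of the averaged J₂ vector field at the averaged solution:
only nonzero entry is `A^Y_P = 6π/P₀³`. -/
noncomputable def Amat (P₀ : ℝ) : Matrix (Fin 3) (Fin 3) ℝ :=
  !![0, 0, 0; 0, 0, 0; 6 * π / P₀ ^ 3, 0, 0]

/-- The fundamental matrix `𝚁(τ)`. -/
noncomputable def Rmat (P₀ τ : ℝ) : Matrix (Fin 3) (Fin 3) ℝ :=
  !![1, 0, 0; 0, 1, 0; 6 * π / P₀ ^ 3 * τ, 0, 1]

/-- The claimed inverse of `𝚁(τ)`. -/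
noncomputable def RmatInv (P₀ τ : ℝ) : Matrix (Fin 3) (Fin 3) ℝ :=
  !![1, 0, 0; 0, 1, 0; -(6 * π / P₀ ^ 3) * τ, 0, 1]

/-- The function `p̄ = (p̄^P, p̄^E, p̄^Y)`. -/
noncomputable def pbarVec (P E Y : ℝ) : Fin 3 → ℝ :=
  ![-(3 * π * E ^ 2 / (2 * P ^ 3)) * sin (2 * Y),
    (3 * π / (4 * P ^ 4)) * (10 * E - E ^ 3) * sin (2 * Y),
    (3 * π / (16 * P ^ 4)) * (34 + 25 * E ^ 2 + (40 + 10 * E ^ 2) * cos (2 * Y))]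

/-- The vector `𝙺(τ)`. -/
noncomputable def Kvec (P₀ E₀ Y₀ τ : ℝ) : Fin 3 → ℝ :=
  ![(E₀ ^ 2 / (4 * P₀)) * (cos (2 * Y₀) - cos (2 * Y₀ - 6 * π / P₀ ^ 2 * τ)),
    -((10 * E₀ - E₀ ^ 3) / (8 * P₀ ^ 2)) * (cos (2 * Y₀) - cos (2 * Y₀ - 6 * π / P₀ ^ 2 * τ)),
    (3 * π / (16 * P₀ ^ 4)) * (34 + 25 * E₀ ^ 2 + 8 * E₀ ^ 2 * cos (2 * Y₀)) * τ
      + ((20 + E₀ ^ 2) / (16 * P₀ ^ 2)) * (sin (2 * Y₀) - sin (2 * Y₀ - 6 * π / P₀ ^ 2 * τ))]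

/-- In the J₂ polar satellite problem: `𝚁(τ)` solves `d𝚁/dτ = A𝚁`, `𝚁(0) = 1`, is
invertible with the indicated inverse, and `𝙺(τ)` solves `d𝙺/dτ = A𝙺 + p̄(𝙹(τ))`,
`𝙺(0) = 0`. -/
theorem stmt_8 (P₀ E₀ Y₀ : ℝ) (hP₀ : 0 < P₀) (hE₀0 : 0 < E₀) (hE₀1 : E₀ < 1) :
    Rmat P₀ 0 = 1
    ∧ Kvec P₀ E₀ Y₀ 0 = 0
    ∧ ∀ τ : ℝ, 0 ≤ τ →
        (∀ i j, HasDerivAt (fun t => Rmat P₀ t i j) ((Amat P₀ * Rmat P₀ τ) i j) τ)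
        ∧ Rmat P₀ τ * RmatInv P₀ τ = 1
        ∧ RmatInv P₀ τ * Rmat P₀ τ = 1
        ∧ IsUnit (Rmat P₀ τ)
        ∧ ∀ i, HasDerivAt (fun t => Kvec P₀ E₀ Y₀ t i)
            ((Amat P₀ *ᵥ Kvec P₀ E₀ Y₀ τ) i
              + pbarVec P₀ E₀ (Y₀ - 3 * π / P₀ ^ 2 * τ) i) τ := by

  have hc : ∀ (a c τ : ℝ), HasDerivAt (fun t : ℝ => Real.cos (a - c * t))
      (Real.sin (a - c * τ) * c) τ := by
    intro a c τ
    have h : HasDerivAt (fun t : ℝ => a - c * t) (0 - c * 1) τ :=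
      (hasDerivAt_const τ a).sub ((hasDerivAt_id τ).const_mul c)
    convert h.cos using 1
    ring
  have hs : ∀ (a c τ : ℝ), HasDerivAt (fun t : ℝ => Real.sin (a - c * t))
      (-(Real.cos (a - c * τ) * c)) τ := by
    intro a c τ
    have h : HasDerivAt (fun t : ℝ => a - c * t) (0 - c * 1) τ :=
      (hasDerivAt_const τ a).sub ((hasDerivAt_id τ).const_mul c)
    convert h.sin using 1
    ring
  have hY : ∀ τ : ℝ, (2 : ℝ) * (Y₀ - 3 * π / P₀ ^ 2 * τ) = 2 * Y₀ - 6 * π / P₀ ^ 2 * τ := by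
    intro τ; ring
  have hP3 : P₀ ^ 3 ≠ 0 := pow_ne_zero 3 hP₀.ne'
  have hP0 : P₀ ≠ 0 := hP₀.ne'
  have hmul : ∀ τ : ℝ, Rmat P₀ τ * RmatInv P₀ τ = 1 := by
    intro τ; ext i j
    fin_cases i <;> fin_cases j <;>
      simp [Rmat, RmatInv, Matrix.mul_apply, Fin.sum_univ_three, Matrix.one_apply, Matrix.vecHead, Matrix.vecTail] <;> ring
  set L : ℝ → (Fin 3 → ℝ) := fun t => Kvec P₀ E₀ Y₀ t with hL
  refine ⟨?_, ?_, fun τ hτ => ⟨?_, hmul τ, ?_, (by haveI := invertibleOfRightInverse _ _ (hmul τ); exact isUnit_of_invertible _), ?_⟩⟩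
  · ext i j; fin_cases i <;> fin_cases j <;> simp [Rmat, Matrix.one_apply, Matrix.vecHead, Matrix.vecTail]
  · funext i
    fin_cases i <;>
      simp [Kvec, Matrix.vecHead, Matrix.vecTail, Function.comp]
  · have hAR : Amat P₀ * Rmat P₀ τ = Amat P₀ := by
      ext i j
      fin_cases i <;> fin_cases j <;>
        simp [Amat, Rmat, Matrix.mul_apply, Fin.sum_univ_three, Matrix.vecHead, Matrix.vecTail]
    intro i j
    rw [hAR]
    fin_cases i <;> fin_cases j <;>
      simp only [Rmat, Amat, Fin.isValue, Fin.zero_eta, Fin.mk_one, Fin.reduceFinMk,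
        Matrix.cons_val_zero, Matrix.cons_val_one, Matrix.head_cons, Matrix.cons_val_two,
        Matrix.tail_cons, Matrix.cons_val', Matrix.empty_val', Matrix.cons_val_fin_one,
        Matrix.head_fin_const] <;>
      first
        | exact hasDerivAt_const τ _
        | (convert (hasDerivAt_id τ).const_mul (6 * π / P₀ ^ 3) using 1
           · rfl
           · rfl
           all_goals simp [Matrix.vecHead, Matrix.vecTail]
           try ring)
  · ext i j
    fin_cases i <;> fin_cases j <;>
      simp [Rmat, RmatInv, Matrix.mul_apply, Fin.sum_univ_three, Matrix.one_apply, Matrix.vecHead, Matrix.vecTail] <;> ring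
  · intro i
    have e0 : (fun t => Kvec P₀ E₀ Y₀ t 0) =
        fun t => (E₀ ^ 2 / (4 * P₀)) * (Real.cos (2 * Y₀) - Real.cos (2 * Y₀ - 6 * π / P₀ ^ 2 * t)) := by
      funext t; simp [Kvec]
    have e1 : (fun t => Kvec P₀ E₀ Y₀ t 1) =
        fun t => -((10 * E₀ - E₀ ^ 3) / (8 * P₀ ^ 2)) *
          (Real.cos (2 * Y₀) - Real.cos (2 * Y₀ - 6 * π / P₀ ^ 2 * t)) := by
      funext t; simp [Kvec]
    have e2 : (fun t => Kvec P₀ E₀ Y₀ t 2) =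
        fun t => (3 * π / (16 * P₀ ^ 4)) * (34 + 25 * E₀ ^ 2 + 8 * E₀ ^ 2 * Real.cos (2 * Y₀)) * t
          + ((20 + E₀ ^ 2) / (16 * P₀ ^ 2)) *
            (Real.sin (2 * Y₀) - Real.sin (2 * Y₀ - 6 * π / P₀ ^ 2 * t)) := by
      funext t; simp [Kvec]
    have hval : ∀ i, (Amat P₀ *ᵥ Kvec P₀ E₀ Y₀ τ) i
        + pbarVec P₀ E₀ (Y₀ - 3 * π / P₀ ^ 2 * τ) i =
        ![-(3 * π * E₀ ^ 2 / (2 * P₀ ^ 3)) * Real.sin (2 * Y₀ - 6 * π / P₀ ^ 2 * τ),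
          3 * π / (4 * P₀ ^ 4) * (10 * E₀ - E₀ ^ 3) * Real.sin (2 * Y₀ - 6 * π / P₀ ^ 2 * τ),
          6 * π / P₀ ^ 3 * ((E₀ ^ 2 / (4 * P₀)) *
              (Real.cos (2 * Y₀) - Real.cos (2 * Y₀ - 6 * π / P₀ ^ 2 * τ)))
            + 3 * π / (16 * P₀ ^ 4) * (34 + 25 * E₀ ^ 2
              + (40 + 10 * E₀ ^ 2) * Real.cos (2 * Y₀ - 6 * π / P₀ ^ 2 * τ))] i := by
      intro i
      fin_cases i <;>
        simp [Amat, Kvec, pbarVec, Matrix.mulVec, dotProduct, Fin.sum_univ_three,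
          Matrix.vecHead, Matrix.vecTail, hY τ]
    rw [hval]
    fin_cases i <;> simp only [Fin.zero_eta, Fin.mk_one, Fin.reduceFinMk]
    · rw [e0]
      show HasDerivAt _
        (![-(3 * π * E₀ ^ 2 / (2 * P₀ ^ 3)) * Real.sin (2 * Y₀ - 6 * π / P₀ ^ 2 * τ), _, _] 0) τ
      simp only [Matrix.cons_val_zero]
      convert ((hc (2 * Y₀) (6 * π / P₀ ^ 2) τ).const_sub (Real.cos (2 * Y₀))).const_mul
        (E₀ ^ 2 / (4 * P₀)) using 1
      · rfl
      · rfl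
      field_simp
      ring
    · rw [e1]
      show HasDerivAt _
        (![_, 3 * π / (4 * P₀ ^ 4) * (10 * E₀ - E₀ ^ 3) * Real.sin (2 * Y₀ - 6 * π / P₀ ^ 2 * τ),
          _] 1) τ
      simp only [Matrix.cons_val_one, Matrix.head_cons, Matrix.cons_val_zero]
      convert ((hc (2 * Y₀) (6 * π / P₀ ^ 2) τ).const_sub (Real.cos (2 * Y₀))).const_mul
        (-((10 * E₀ - E₀ ^ 3) / (8 * P₀ ^ 2))) using 1
      · rfl
      · rfl
      field_simp
      ring
    · rw [e2]
      show HasDerivAt _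
        (![_, _, 6 * π / P₀ ^ 3 * ((E₀ ^ 2 / (4 * P₀)) *
              (Real.cos (2 * Y₀) - Real.cos (2 * Y₀ - 6 * π / P₀ ^ 2 * τ)))
            + 3 * π / (16 * P₀ ^ 4) * (34 + 25 * E₀ ^ 2
              + (40 + 10 * E₀ ^ 2) * Real.cos (2 * Y₀ - 6 * π / P₀ ^ 2 * τ))] 2) τ
      simp only [Matrix.cons_val_two, Matrix.tail_cons, Matrix.head_cons, Matrix.cons_val_one,
        Matrix.cons_val_zero]
      convert (((hasDerivAt_id τ).const_mul
          (3 * π / (16 * P₀ ^ 4) * (34 + 25 * E₀ ^ 2 + 8 * E₀ ^ 2 * Real.cos (2 * Y₀)))).add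
        (((hs (2 * Y₀) (6 * π / P₀ ^ 2) τ).const_sub (Real.sin (2 * Y₀))).const_mul
          ((20 + E₀ ^ 2) / (16 * P₀ ^ 2)))) using 1
      · rfl
      · rfl
      · rfl
      field_simp
      ring
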